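/- The randomized RandGreeDi algorithm, run with an α-approximate Greedy in the first round and a β-approximate algorithm Alg in the second round, returns a solution D with E[f(D)] ≥ (αβ/(α+β))·f(OPT) for maximizing a monotone submodular function subject to a hereditary constraint. -/

import Mathlib

open MeasureTheory Finset

/-- A set function is submodular. -/
def Submodular {V : Type*} [DecidableEq V] (f : Finset V → ℝ) : Prop :=
  ∀ A B : Finset V, f (A ∪ B) + f (A ∩ B) ≤ f A + f B

/-- The Lovász extension: expectation over a uniform threshold θ ∈ (0,1). -/
noncomputable def lovasz {V : Type*} [Fintype V] [DecidableEq V]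
    (f : Finset V → ℝ) (x : V → ℝ) : ℝ :=
  ∫ θ in Set.Ioo (0:ℝ) 1, f (Finset.univ.filter (fun i => θ ≤ x i))

/-- Characteristic vector of a finite set. -/
def charVec {V : Type*} [DecidableEq V] (S : Finset V) : V → ℝ :=
  fun i => if i ∈ S then 1 else 0
/-- One pass of the standard greedy algorithm with fuel `n`: at each step add the
feasible element of `X` with maximum nonnegative marginal gain, breaking ties by
the fixed linear order on `V` (choosing the least maximizer). -/
noncomputable def greedyAux {V : Type*} [Fintype V] [DecidableEq V] [LinearOrder V]
    (f : Finset V → ℝ) (I : Finset V → Prop) [DecidablePred I]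
    (X : Finset V) : ℕ → Finset V → Finset V
  | 0, S => S
  | (n+1), S =>
    let C := (X \ S).filter (fun e => I (insert e S) ∧ 0 ≤ f (insert e S) - f S)
    let M := C.filter (fun e => ∀ e' ∈ C, f (insert e' S) - f S ≤ f (insert e S) - f S)
    if h : M.Nonempty then greedyAux f I X n (insert (M.min' h) S) else S

/-- The standard greedy algorithm on ground set `X`. -/
noncomputable def greedy {V : Type*} [Fintype V] [DecidableEq V] [LinearOrder V]
    (f : Finset V → ℝ) (I : Finset V → Prop) [DecidablePred I]
    (X : Finset V) : Finset V :=
  greedyAux f I X (Fintype.card V) ∅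
/-- Expectation of `g` over a uniformly random assignment of elements to `m` machines. -/
noncomputable def expAssign {V : Type*} [Fintype V] [DecidableEq V] (m : ℕ) (g : (V → Fin m) → ℝ) : ℝ :=
  (∑ σ : V → Fin m, g σ) / (Fintype.card (V → Fin m) : ℝ)

/-- The set of elements assigned to machine `i` by the assignment `σ`. -/
def machineSet {V : Type*} [Fintype V] [DecidableEq V] {m : ℕ}
    (σ : V → Fin m) (i : Fin m) : Finset V :=
  Finset.univ.filter (fun e => σ e = i)


section AuxRandGreedi

set_option linter.unusedSectionVars false

variable {V : Type*} [Fintype V] [DecidableEq V] [LinearOrder V]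
    (f : Finset V → ℝ) (I : Finset V → Prop) [DecidablePred I]

noncomputable def Cset (X S : Finset V) : Finset V :=
  (X \ S).filter (fun e => I (insert e S) ∧ 0 ≤ f (insert e S) - f S)

noncomputable def Mset (X S : Finset V) : Finset V :=
  (Cset f I X S).filter (fun e => ∀ e' ∈ Cset f I X S, f (insert e' S) - f S ≤ f (insert e S) - f S)

lemma greedyAux_succ (X S : Finset V) (n : ℕ) :
    greedyAux f I X (n+1) S =
      if h : (Mset f I X S).Nonempty then greedyAux f I X n (insert ((Mset f I X S).min' h) S)
      else S := rfl

lemma Cset_subset_sdiff (X S : Finset V) : Cset f I X S ⊆ X \ S := filter_subset _ _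

lemma Mset_subset_Cset (X S : Finset V) : Mset f I X S ⊆ Cset f I X S := filter_subset _ _

lemma mem_Cset {X S : Finset V} {e : V} :
    e ∈ Cset f I X S ↔ (e ∈ X ∧ e ∉ S) ∧ I (insert e S) ∧ 0 ≤ f (insert e S) - f S := by
  simp [Cset, Finset.mem_filter, Finset.mem_sdiff]

lemma mem_Mset {X S : Finset V} {e : V} :
    e ∈ Mset f I X S ↔ e ∈ Cset f I X S ∧
      ∀ e' ∈ Cset f I X S, f (insert e' S) - f S ≤ f (insert e S) - f S := by
  simp [Mset, Finset.mem_filter]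

lemma Mset_nonempty {X S : Finset V} (h : (Cset f I X S).Nonempty) :
    (Mset f I X S).Nonempty := by
  obtain ⟨b, hb, hmax⟩ := Finset.exists_max_image (Cset f I X S)
    (fun e => f (insert e S) - f S) h
  exact ⟨b, (mem_Mset f I).2 ⟨hb, hmax⟩⟩

lemma Cset_empty_of_Mset_empty {X S : Finset V} (h : ¬ (Mset f I X S).Nonempty) :
    Cset f I X S = ∅ := by
  by_contra hc
  exact h (Mset_nonempty f I (Finset.nonempty_iff_ne_empty.2 hc))

lemma subset_greedyAux (X : Finset V) : ∀ (n : ℕ) (S : Finset V), S ⊆ greedyAux f I X n S := by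
  intro n
  induction n with
  | zero => intro S; rfl
  | succ n ih =>
    intro S
    rw [greedyAux_succ]
    split
    · exact (Finset.subset_insert _ _).trans (ih _)
    · rfl

lemma greedyAux_subset (X : Finset V) : ∀ (n : ℕ) (S : Finset V), greedyAux f I X n S ⊆ X ∪ S := by
  intro n
  induction n with
  | zero => intro S; exact Finset.subset_union_right
  | succ n ih =>
    intro S
    rw [greedyAux_succ]
    split
    · rename_i h
      refine (ih _).trans ?_
      have hg : (Mset f I X S).min' h ∈ X :=
        ((Finset.mem_sdiff.1 (Cset_subset_sdiff f I X S
          (Mset_subset_Cset f I X S (Finset.min'_mem _ h))))).1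
      intro x hx
      rcases Finset.mem_union.1 hx with hx | hx
      · exact Finset.mem_union_left _ hx
      · rcases Finset.mem_insert.1 hx with rfl | hx
        · exact Finset.mem_union_left _ hg
        · exact Finset.mem_union_right _ hx
    · exact Finset.subset_union_right

set_option linter.unusedSectionVars false

lemma Cset_mono {X Y S : Finset V} (hXY : X ⊆ Y) : Cset f I X S ⊆ Cset f I Y S := by
  intro x hx
  rw [mem_Cset] at hx ⊢
  exact ⟨⟨hXY hx.1.1, hx.1.2⟩, hx.2⟩

lemma Cset_insert_subset {X S : Finset V} {e : V} :
    Cset f I (insert e X) S ⊆ insert e (Cset f I X S) := by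
  intro x hx
  rw [mem_Cset] at hx
  rcases Finset.mem_insert.1 hx.1.1 with rfl | hxX
  · exact Finset.mem_insert_self _ _
  · exact Finset.mem_insert_of_mem ((mem_Cset f I).2 ⟨⟨hxX, hx.1.2⟩, hx.2⟩)

lemma Cset_transfer {X Y S : Finset V} {x : V} (hx : x ∈ Cset f I X S) (hxY : x ∈ Y) :
    x ∈ Cset f I Y S := by
  rw [mem_Cset] at hx ⊢
  exact ⟨⟨hxY, hx.1.2⟩, hx.2⟩

lemma min'_mem_greedyAux {X S : Finset V} (n : ℕ) (hM : (Mset f I X S).Nonempty) :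
    (Mset f I X S).min' hM ∈ greedyAux f I X (n+1) S := by
  rw [greedyAux_succ, dif_pos hM]
  exact subset_greedyAux f I X n _ (Finset.mem_insert_self _ _)

lemma Mset_insert_agree {X S : Finset V} {e : V}
    (hM : (Mset f I (insert e X) S).Nonempty)
    (hne : (Mset f I (insert e X) S).min' hM ≠ e) :
    ∃ hM' : (Mset f I X S).Nonempty,
      (Mset f I X S).min' hM' = (Mset f I (insert e X) S).min' hM := by
  set g := (Mset f I (insert e X) S).min' hM with hgdef
  have hgM : g ∈ Mset f I (insert e X) S := Finset.min'_mem _ hM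
  rw [mem_Mset] at hgM
  have hgC : g ∈ Cset f I X S := by
    rcases Finset.mem_insert.1 (Cset_insert_subset f I hgM.1) with h | h
    · exact absurd h hne
    · exact h
  have hgMX : g ∈ Mset f I X S :=
    (mem_Mset f I).2 ⟨hgC, fun y hy => hgM.2 y (Cset_mono f I (Finset.subset_insert _ _) hy)⟩
  have hM' : (Mset f I X S).Nonempty := ⟨g, hgMX⟩
  refine ⟨hM', le_antisymm (Finset.min'_le _ _ hgMX) (Finset.le_min' _ _ _ ?_)⟩
  intro x hx
  have hxM := hx
  rw [mem_Mset] at hxM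
  have hxMe : x ∈ Mset f I (insert e X) S := by
    refine (mem_Mset f I).2 ⟨Cset_mono f I (Finset.subset_insert _ _) hxM.1, ?_⟩
    intro y hy
    rcases Finset.mem_insert.1 (Cset_insert_subset f I hy) with rfl | hyC
    · exact le_trans (hgM.2 y hy) (hxM.2 g hgC)
    · exact hxM.2 y hyC
  exact Finset.min'_le _ _ hxMe

lemma greedyAux_dichotomy {X : Finset V} {e : V} (heX : e ∉ X) :
    ∀ (n : ℕ) (S : Finset V), e ∉ S →
      greedyAux f I (insert e X) n S = greedyAux f I X n S ∨
        e ∈ greedyAux f I (insert e X) n S := by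
  intro n
  induction n with
  | zero => intro S _; exact Or.inl rfl
  | succ n ih =>
    intro S heS
    by_cases hM : (Mset f I (insert e X) S).Nonempty
    · by_cases hg : (Mset f I (insert e X) S).min' hM = e
      · right
        have := min'_mem_greedyAux f I n hM
        rwa [hg] at this
      · obtain ⟨hM', hmin⟩ := Mset_insert_agree f I hM hg
        rw [greedyAux_succ _ _ (insert e X), dif_pos hM, greedyAux_succ _ _ X, dif_pos hM',
          hmin]
        refine ih _ ?_
        simp only [Finset.mem_insert]
        push_neg
        refine ⟨fun hc => hg ?_, heS⟩
        · exact hc.symm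
    · left
      have hC : Cset f I (insert e X) S = ∅ := Cset_empty_of_Mset_empty f I hM
      have hMX : ¬ (Mset f I X S).Nonempty := by
        intro ⟨x, hx⟩
        have : x ∈ Cset f I (insert e X) S :=
          Cset_mono f I (Finset.subset_insert _ _) (Mset_subset_Cset f I _ _ hx)
        simp [hC] at this
      rw [greedyAux_succ _ _ (insert e X), dif_neg hM, greedyAux_succ _ _ X, dif_neg hMX]

lemma greedyAux_localization (X D : Finset V) :
    ∀ (n : ℕ) (S : Finset V),
      (∀ e ∈ D, e ∉ X ∧ e ∉ S ∧ greedyAux f I (insert e X) n S = greedyAux f I X n S) →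
      greedyAux f I (X ∪ D) n S = greedyAux f I X n S := by
  intro n
  induction n with
  | zero => intro S _; rfl
  | succ n ih =>
    intro S h
    -- no element of D is ever the first pick of its own augmented run
    have Hd : ∀ d ∈ D, ∀ (hMd : (Mset f I (insert d X) S).Nonempty),
        (Mset f I (insert d X) S).min' hMd ≠ d := by
      intro d hd hMd hc
      have hmem : d ∈ greedyAux f I (insert d X) (n+1) S := by
        have := min'_mem_greedyAux f I n hMd
        rwa [hc] at this
      rw [(h d hd).2.2] at hmem
      have := greedyAux_subset f I X (n+1) S hmem
      rcases Finset.mem_union.1 this with h1 | h1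
      · exact (h d hd).1 h1
      · exact (h d hd).2.1 h1
    have hCD : ∀ x ∈ Cset f I (X ∪ D) S, x ∈ Cset f I X S ∨ x ∈ D := by
      intro x hx
      have := (mem_Cset f I).1 hx
      rcases Finset.mem_union.1 this.1.1 with h1 | h1
      · exact Or.inl ((mem_Cset f I).2 ⟨⟨h1, this.1.2⟩, this.2⟩)
      · exact Or.inr h1
    by_cases hMX : (Mset f I X S).Nonempty
    · set g := (Mset f I X S).min' hMX with hgdef
      have hgMX : g ∈ Mset f I X S := Finset.min'_mem _ hMX
      have hgC : g ∈ Cset f I X S := Mset_subset_Cset f I _ _ hgMX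
      -- key: for d ∈ D in the candidate set, the augmented run's first pick is g
      have key : ∀ d ∈ D, d ∈ Cset f I (X ∪ D) S →
          ∃ (hMd : (Mset f I (insert d X) S).Nonempty),
            (Mset f I (insert d X) S).min' hMd = g ∧
            f (insert d S) - f S ≤ f (insert g S) - f S := by
        intro d hd hdC
        have hdCd : d ∈ Cset f I (insert d X) S :=
          Cset_transfer f I hdC (Finset.mem_insert_self _ _)
        have hMd : (Mset f I (insert d X) S).Nonempty := Mset_nonempty f I ⟨d, hdCd⟩
        have hne := Hd d hd hMd
        obtain ⟨hM', hmin⟩ := Mset_insert_agree f I hMd hne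
        have hming : (Mset f I (insert d X) S).min' hMd = g := by
          rw [← hmin]
        have hgMd : g ∈ Mset f I (insert d X) S := by
          have := Finset.min'_mem _ hMd
          rwa [hming] at this
        refine ⟨hMd, hming, ?_⟩
        exact ((mem_Mset f I).1 hgMd).2 d hdCd
      have hgMD : g ∈ Mset f I (X ∪ D) S := by
        refine (mem_Mset f I).2 ⟨Cset_mono f I Finset.subset_union_left hgC, ?_⟩
        intro y hy
        rcases hCD y hy with h1 | h1
        · exact ((mem_Mset f I).1 hgMX).2 y h1
        · exact (key y h1 hy).2.2
      have hMD : (Mset f I (X ∪ D) S).Nonempty := ⟨g, hgMD⟩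
      have hminD : (Mset f I (X ∪ D) S).min' hMD = g := by
        refine le_antisymm (Finset.min'_le _ _ hgMD) (Finset.le_min' _ _ _ ?_)
        intro x hx
        have hxM := (mem_Mset f I).1 hx
        rcases hCD x hxM.1 with h1 | h1
        · -- x ∈ Cset X S, hence x ∈ Mset X S
          have : x ∈ Mset f I X S :=
            (mem_Mset f I).2 ⟨h1, fun y hy =>
              hxM.2 y (Cset_mono f I Finset.subset_union_left hy)⟩
          exact Finset.min'_le _ _ this
        · -- x ∈ D
          obtain ⟨hMd, hming, _⟩ := key x h1 hxM.1
          calc g = (Mset f I (insert x X) S).min' hMd := hming.symm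
            _ ≤ x := Finset.min'_le _ _ ((mem_Mset f I).2
                ⟨Cset_transfer f I hxM.1 (Finset.mem_insert_self _ _), fun y hy =>
                  hxM.2 y (Cset_mono f I (Finset.insert_subset
                    (Finset.mem_union_right _ h1) Finset.subset_union_left) hy)⟩)
      rw [greedyAux_succ _ _ (X ∪ D), dif_pos hMD, hminD, greedyAux_succ _ _ X, dif_pos hMX]
      refine ih (insert g S) ?_
      intro e he
      have heX := (h e he).1
      have heS := (h e he).2.1
      have hgX : g ∈ X := (Finset.mem_sdiff.1 (Cset_subset_sdiff f I X S hgC)).1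
      have heg : e ∉ insert g S := by
        simp only [Finset.mem_insert]
        push_neg
        exact ⟨fun hc => heX (hc ▸ hgX), heS⟩
      refine ⟨heX, heg, ?_⟩
      -- unfold the hypothesis equality at n+1
      have hMe : (Mset f I (insert e X) S).Nonempty := by
        have : g ∈ Cset f I (insert e X) S := Cset_mono f I (Finset.subset_insert _ _) hgC
        exact Mset_nonempty f I ⟨g, this⟩
      have hne := Hd e he hMe
      obtain ⟨hM', hmin⟩ := Mset_insert_agree f I hMe hne
      have hming : (Mset f I (insert e X) S).min' hMe = g := by rw [← hmin]
      have heq := (h e he).2.2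
      rw [greedyAux_succ _ _ (insert e X), dif_pos hMe, hming,
        greedyAux_succ _ _ X, dif_pos hMX] at heq
      exact heq
    · have hC : Cset f I X S = ∅ := Cset_empty_of_Mset_empty f I hMX
      have hCDempty : ¬ (Mset f I (X ∪ D) S).Nonempty := by
        intro ⟨x, hx⟩
        have hxC := Mset_subset_Cset f I _ _ hx
        rcases hCD x hxC with h1 | h1
        · simp [hC] at h1
        · have hxCd : x ∈ Cset f I (insert x X) S :=
            Cset_transfer f I hxC (Finset.mem_insert_self _ _)
          have hMd : (Mset f I (insert x X) S).Nonempty := Mset_nonempty f I ⟨x, hxCd⟩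
          have hne := Hd x h1 hMd
          have : (Mset f I (insert x X) S).min' hMd ∈ Cset f I (insert x X) S :=
            Mset_subset_Cset f I _ _ (Finset.min'_mem _ hMd)
          rcases Finset.mem_insert.1 (Cset_insert_subset f I this) with h2 | h2
          · exact hne h2
          · simp [hC] at h2
      rw [greedyAux_succ _ _ (X ∪ D), dif_neg hCDempty, greedyAux_succ _ _ X, dif_neg hMX]

/-- Marginal gains along the order, telescoping. -/
lemma chain_sum (O : Finset V) :
    ∑ e ∈ O, (f (O.filter (fun x => x ≤ e)) - f (O.filter (fun x => x < e))) = f O - f ∅ := by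
  induction O using Finset.strongInduction with
  | _ O ih =>
    rcases O.eq_empty_or_nonempty with rfl | hO
    · simp
    · set e := O.max' hO with he
      have heO : e ∈ O := O.max'_mem hO
      have hsub : O.erase e ⊂ O := Finset.erase_ssubset heO
      have h1 : O.filter (fun x => x ≤ e) = O := by
        apply Finset.filter_true_of_mem
        intro x hx; exact O.le_max' x hx
      have h2 : O.filter (fun x => x < e) = O.erase e := by
        ext x
        simp only [Finset.mem_filter, Finset.mem_erase]
        constructor
        · rintro ⟨hx, hlt⟩; exact ⟨ne_of_lt hlt, hx⟩
        · rintro ⟨hne, hx⟩; exact ⟨hx, lt_of_le_of_ne (O.le_max' x hx) hne⟩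
      have hrest : ∀ x ∈ O.erase e,
          (f (O.filter (fun y => y ≤ x)) - f (O.filter (fun y => y < x)))
          = (f ((O.erase e).filter (fun y => y ≤ x)) - f ((O.erase e).filter (fun y => y < x))) := by
        intro x hx
        have hxlt : x < e := by
          obtain ⟨hne', hxO⟩ := Finset.mem_erase.1 hx
          exact lt_of_le_of_ne (O.le_max' x hxO) hne'
        have e1 : O.filter (fun y => y ≤ x) = (O.erase e).filter (fun y => y ≤ x) := by
          ext y
          simp only [Finset.mem_filter, Finset.mem_erase]
          constructor
          · rintro ⟨hy, hyx⟩; exact ⟨⟨fun hc => absurd hyx (by rw [hc]; exact not_le.2 hxlt), hy⟩, hyx⟩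
          · rintro ⟨⟨_, hy⟩, hyx⟩; exact ⟨hy, hyx⟩
        have e2 : O.filter (fun y => y < x) = (O.erase e).filter (fun y => y < x) := by
          ext y
          simp only [Finset.mem_filter, Finset.mem_erase]
          constructor
          · rintro ⟨hy, hyx⟩; exact ⟨⟨fun hc => absurd hyx (by rw [hc]; exact not_lt.2 hxlt.le), hy⟩, hyx⟩
          · rintro ⟨⟨_, hy⟩, hyx⟩; exact ⟨hy, hyx⟩
        rw [e1, e2]
      calc ∑ x ∈ O, (f (O.filter (fun y => y ≤ x)) - f (O.filter (fun y => y < x)))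
          = (f (O.filter (fun y => y ≤ e)) - f (O.filter (fun y => y < e))) +
            ∑ x ∈ O.erase e, (f (O.filter (fun y => y ≤ x)) - f (O.filter (fun y => y < x))) :=
            (Finset.add_sum_erase _ _ heO).symm
        _ = (f O - f (O.erase e)) +
            ∑ x ∈ O.erase e, (f ((O.erase e).filter (fun y => y ≤ x)) - f ((O.erase e).filter (fun y => y < x))) := by
            rw [h1, h2, Finset.sum_congr rfl hrest]
        _ = (f O - f (O.erase e)) + (f (O.erase e) - f ∅) := by rw [ih _ hsub]
        _ = f O - f ∅ := by ring

/-- Submodularity in marginal form. -/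
lemma submod_marginal (hsub : Submodular f) {B A : Finset V} {e : V}
    (hBA : B ⊆ A) (heA : e ∉ A) :
    f (insert e A) - f A ≤ f (insert e B) - f B := by
  have h := hsub (insert e B) A
  have h1 : insert e B ∪ A = insert e A := by
    rw [Finset.insert_union, Finset.union_eq_right.2 hBA]
  have h2 : insert e B ∩ A = B := by
    ext x
    simp only [Finset.mem_inter, Finset.mem_insert]
    constructor
    · rintro ⟨rfl | hx, hxA⟩
      · exact absurd hxA heA
      · exact hx
    · intro hx; exact ⟨Or.inr hx, hBA hx⟩
  rw [h1, h2] at h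
  linarith

/-- Key linear lower bound: for `A ⊆ O`,
`f O ≤ f A + ∑_{e ∈ O \ A} (f (O≤e) - f (O<e))`. -/
lemma chain_lower_bound (hsub : Submodular f) (O : Finset V) :
    ∀ (k : ℕ) (A : Finset V), A ⊆ O → (O \ A).card = k →
      f O ≤ f A + ∑ e ∈ O \ A, (f (O.filter (fun x => x ≤ e)) - f (O.filter (fun x => x < e))) := by
  intro k
  induction k with
  | zero =>
    intro A hA hcard
    have : O \ A = ∅ := Finset.card_eq_zero.1 hcard
    have hOA : A = O := Finset.Subset.antisymm hA (Finset.sdiff_eq_empty_iff_subset.1 this)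
    rw [this, hOA]
    simp
  | succ k ih =>
    intro A hA hcard
    have hne : (O \ A).Nonempty := Finset.card_pos.1 (by omega)
    set e := (O \ A).min' hne with he
    have heOA : e ∈ O \ A := Finset.min'_mem _ hne
    have heO : e ∈ O := (Finset.mem_sdiff.1 heOA).1
    have heA : e ∉ A := (Finset.mem_sdiff.1 heOA).2
    have hBA : O.filter (fun x => x < e) ⊆ A := by
      intro x hx
      obtain ⟨hxO, hxe⟩ := Finset.mem_filter.1 hx
      by_contra hxA
      have : e ≤ x := Finset.min'_le _ _ (Finset.mem_sdiff.2 ⟨hxO, hxA⟩)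
      exact absurd hxe (not_lt.2 this)
    have hinsertB : insert e (O.filter (fun x => x < e)) = O.filter (fun x => x ≤ e) := by
      ext x
      simp only [Finset.mem_insert, Finset.mem_filter]
      constructor
      · rintro (rfl | ⟨hx, hlt⟩)
        · exact ⟨heO, le_refl _⟩
        · exact ⟨hx, hlt.le⟩
      · rintro ⟨hx, hle⟩
        rcases eq_or_lt_of_le hle with rfl | hlt
        · exact Or.inl rfl
        · exact Or.inr ⟨hx, hlt⟩
    have hmarg : f (insert e A) - f A ≤
        f (O.filter (fun x => x ≤ e)) - f (O.filter (fun x => x < e)) := by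
      rw [← hinsertB]
      exact submod_marginal f hsub hBA heA
    have hA' : insert e A ⊆ O := Finset.insert_subset heO hA
    have hcard' : (O \ insert e A).card = k := by
      have : O \ insert e A = (O \ A).erase e := by
        ext x
        simp only [Finset.mem_sdiff, Finset.mem_erase, Finset.mem_insert]
        tauto
      rw [this, Finset.card_erase_of_mem heOA, hcard]
      omega
    have := ih (insert e A) hA' hcard'
    have hsum : ∑ x ∈ O \ A, (f (O.filter (fun y => y ≤ x)) - f (O.filter (fun y => y < x)))
        = (f (O.filter (fun y => y ≤ e)) - f (O.filter (fun y => y < e))) +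
          ∑ x ∈ (O \ A).erase e, (f (O.filter (fun y => y ≤ x)) - f (O.filter (fun y => y < x))) :=
      (Finset.add_sum_erase _ _ heOA).symm
    have hre : O \ insert e A = (O \ A).erase e := by
      ext x
      simp only [Finset.mem_sdiff, Finset.mem_erase, Finset.mem_insert]
      tauto
    rw [hre] at this
    rw [hsum]
    linarith

lemma greedy_subset (X : Finset V) : greedy f I X ⊆ X := by
  have := greedyAux_subset f I X (Fintype.card V) ∅
  simpa [greedy] using this

lemma greedy_dichotomy {X : Finset V} {e : V} (heX : e ∉ X) :
    greedy f I (insert e X) = greedy f I X ∨ e ∈ greedy f I (insert e X) :=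
  greedyAux_dichotomy f I heX (Fintype.card V) ∅ (Finset.notMem_empty e)

lemma greedy_localization {X D : Finset V}
    (h : ∀ e ∈ D, greedy f I (insert e X) = greedy f I X) :
    greedy f I (X ∪ D) = greedy f I X := by
  have h1 : X ∪ D = X ∪ (D \ X) := by
    rw [Finset.union_sdiff_self_eq_union]
  rw [h1]
  exact greedyAux_localization f I X (D \ X) (Fintype.card V) ∅
    (fun e he => ⟨(Finset.mem_sdiff.1 he).2, Finset.notMem_empty e,
      h e (Finset.mem_sdiff.1 he).1⟩)

def Bset (e : V) {m : ℕ} (τ : {j : V // j ≠ e} → Fin m) (i : Fin m) : Finset V :=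
  Finset.univ.filter (fun v => if h : v = e then False else τ ⟨v, h⟩ = i)

lemma not_mem_Bset (e : V) {m : ℕ} (τ : {j : V // j ≠ e} → Fin m) (i : Fin m) :
    e ∉ Bset e τ i := by
  simp [Bset]

lemma machineSet_split (e : V) {m : ℕ} (j : Fin m) (τ : {j : V // j ≠ e} → Fin m) (i : Fin m) :
    machineSet ((Equiv.funSplitAt e (Fin m)).symm (j, τ)) i =
      if i = j then insert e (Bset e τ i) else Bset e τ i := by
  ext v
  by_cases hv : v = e
  · subst hv
    by_cases hij : i = j <;>
      simp [machineSet, Bset, Equiv.funSplitAt_symm_apply, hij, eq_comm]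
  · by_cases hij : i = j <;>
      simp [machineSet, Bset, Equiv.funSplitAt_symm_apply, hij, hv]

lemma marginal_bound {m : ℕ} (hm : 0 < m) (OPT : Finset V) (e : V) (he : e ∈ OPT) :
    (Fintype.card (V → Fin m) : ℝ) ≤
      ∑ σ : V → Fin m,
        ((if e ∈ Finset.univ.biUnion (fun i : Fin m => greedy f I (machineSet σ i))
            then (1:ℝ) else 0)
          + (m:ℝ)⁻¹ * ∑ i : Fin m,
              (if e ∈ OPT.filter
                  (fun x => greedy f I (insert x (machineSet σ i)) = greedy f I (machineSet σ i))
                then (1:ℝ) else 0)) := by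
  have hm' : (0:ℝ) < m := by exact_mod_cast hm
  set E := Equiv.funSplitAt e (Fin m) with hE
  set g : (V → Fin m) → ℝ := fun σ =>
    ((if e ∈ Finset.univ.biUnion (fun i : Fin m => greedy f I (machineSet σ i))
        then (1:ℝ) else 0)
      + (m:ℝ)⁻¹ * ∑ i : Fin m,
          (if e ∈ OPT.filter
              (fun x => greedy f I (insert x (machineSet σ i)) = greedy f I (machineSet σ i))
            then (1:ℝ) else 0)) with hg
  have hsum : ∑ σ : V → Fin m, g σ = ∑ p : Fin m × ({j : V // j ≠ e} → Fin m), g (E.symm p) :=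
    (E.symm.sum_comp g).symm
  have hcard : (Fintype.card (V → Fin m) : ℝ)
      = ∑ _τ : ({j : V // j ≠ e} → Fin m), (m:ℝ) := by
    rw [Finset.sum_const, Finset.card_univ, Fintype.card_congr E, Fintype.card_prod,
      Fintype.card_fin]
    push_cast; ring
  rw [hsum, Fintype.sum_prod_type, Finset.sum_comm, hcard]
  apply Finset.sum_le_sum
  intro τ _
  -- per-τ analysis
  set B : Fin m → Finset V := Bset e τ with hB
  set a : Fin m → ℝ := fun i => if e ∈ greedy f I (insert e (B i)) then (1:ℝ) else 0 with ha
  set r : Fin m → ℝ := fun i =>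
    if greedy f I (insert e (B i)) = greedy f I (B i) then (1:ℝ) else 0 with hr
  have hr01 : ∀ i, 0 ≤ r i ∧ r i ≤ 1 := by
    intro i; simp only [hr]; split <;> norm_num
  have ha0 : ∀ i, 0 ≤ a i := by
    intro i; simp only [ha]; split <;> norm_num
  have hra : ∀ i, (1:ℝ) ≤ r i + a i := by
    intro i
    rcases greedy_dichotomy f I (not_mem_Bset e τ i) with h | h
    · have h1 : r i = 1 := by simp [hr, hB, h]
      have := ha0 i
      rw [h1]; linarith
    · have h1 : a i = 1 := by simp [ha, hB, h]
      have := (hr01 i).1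
      rw [h1]; linarith
  have hterm : ∀ j : Fin m, a j + (m:ℝ)⁻¹ * ∑ i : Fin m, (if i = j then (1:ℝ) else r i)
      ≤ g (E.symm (j, τ)) := by
    intro j
    have h1 : a j ≤ (if e ∈ Finset.univ.biUnion
        (fun i : Fin m => greedy f I (machineSet (E.symm (j, τ)) i)) then (1:ℝ) else 0) := by
      by_cases hmem : e ∈ greedy f I (insert e (B j))
      · have : e ∈ Finset.univ.biUnion
            (fun i : Fin m => greedy f I (machineSet (E.symm (j, τ)) i)) := by
          refine Finset.mem_biUnion.2 ⟨j, Finset.mem_univ _, ?_⟩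
          rw [machineSet_split, if_pos rfl]
          exact hmem
        simp [ha, hmem, this]
      · simp [ha, hmem]
        split <;> norm_num
    have h2 : ∀ i : Fin m, (if i = j then (1:ℝ) else r i) ≤
        (if e ∈ OPT.filter (fun x => greedy f I (insert x (machineSet (E.symm (j, τ)) i))
            = greedy f I (machineSet (E.symm (j, τ)) i)) then (1:ℝ) else 0) := by
      intro i
      rw [machineSet_split]
      by_cases hij : i = j
      · rw [if_pos hij, if_pos hij, if_pos]
        rw [Finset.mem_filter]
        exact ⟨he, by rw [Finset.insert_idem]⟩
      · rw [if_neg hij, if_neg hij]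
        simp only [hr]
        by_cases hcond : greedy f I (insert e (B i)) = greedy f I (B i)
        · rw [if_pos hcond, if_pos]
          rw [Finset.mem_filter]
          exact ⟨he, hcond⟩
        · rw [if_neg hcond]
          split <;> norm_num
    calc a j + (m:ℝ)⁻¹ * ∑ i : Fin m, (if i = j then (1:ℝ) else r i)
        ≤ (if e ∈ Finset.univ.biUnion
            (fun i : Fin m => greedy f I (machineSet (E.symm (j, τ)) i)) then (1:ℝ) else 0)
          + (m:ℝ)⁻¹ * ∑ i : Fin m,
            (if e ∈ OPT.filter (fun x => greedy f I (insert x (machineSet (E.symm (j, τ)) i))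
                = greedy f I (machineSet (E.symm (j, τ)) i)) then (1:ℝ) else 0) := by
          have := Finset.sum_le_sum (fun i (_ : i ∈ Finset.univ) => h2 i)
          have h3 : (m:ℝ)⁻¹ * ∑ i : Fin m, (if i = j then (1:ℝ) else r i) ≤
              (m:ℝ)⁻¹ * ∑ i : Fin m,
                (if e ∈ OPT.filter (fun x => greedy f I (insert x (machineSet (E.symm (j, τ)) i))
                    = greedy f I (machineSet (E.symm (j, τ)) i)) then (1:ℝ) else 0) :=
            mul_le_mul_of_nonneg_left this (by positivity)
          linarith
      _ = g (E.symm (j, τ)) := rfl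
  -- now sum over j and do arithmetic
  have hsum2 : ∑ j : Fin m, (a j + (m:ℝ)⁻¹ * ∑ i : Fin m, (if i = j then (1:ℝ) else r i))
      ≤ ∑ j : Fin m, g (E.symm (j, τ)) := Finset.sum_le_sum (fun j _ => hterm j)
  refine le_trans ?_ hsum2
  -- compute the LHS
  have hswap : ∑ j : Fin m, ∑ i : Fin m, (if i = j then (1:ℝ) else r i)
      = ∑ i : Fin m, ∑ j : Fin m, (if i = j then (1:ℝ) else r i) := Finset.sum_comm
  have hinner : ∀ i : Fin m, ∑ j : Fin m, (if i = j then (1:ℝ) else r i)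
      = (m:ℝ) * r i + (1 - r i) := by
    intro i
    have : ∀ j : Fin m, (if i = j then (1:ℝ) else r i) = r i + (if i = j then 1 - r i else 0) := by
      intro j; split <;> ring
    rw [Finset.sum_congr rfl (fun j _ => this j), Finset.sum_add_distrib,
      Finset.sum_const, Finset.sum_ite_eq, if_pos (Finset.mem_univ i), Finset.card_univ,
      Fintype.card_fin, nsmul_eq_mul]
  rw [Finset.sum_add_distrib, ← Finset.mul_sum, hswap,
    Finset.sum_congr rfl (fun i _ => hinner i)]
  have hRA : (m:ℝ) ≤ ∑ i : Fin m, r i + ∑ i : Fin m, a i := by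
    have := Finset.sum_le_sum (fun i (_ : i ∈ Finset.univ) => hra i)
    simpa [Finset.sum_add_distrib, Finset.card_univ] using this
  have hRm : ∑ i : Fin m, r i ≤ (m:ℝ) := by
    have := Finset.sum_le_sum (fun i (_ : i ∈ Finset.univ) => (hr01 i).2)
    simpa [Finset.card_univ] using this
  have hexp : ∑ i : Fin m, ((m:ℝ) * r i + (1 - r i))
      = (m:ℝ) * (∑ i : Fin m, r i) + ((m:ℝ) - ∑ i : Fin m, r i) := by
    rw [Finset.sum_add_distrib, ← Finset.mul_sum, Finset.sum_sub_distrib,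
      Finset.sum_const, Finset.card_univ, Fintype.card_fin, nsmul_eq_mul, mul_one]
  rw [hexp]
  set R := ∑ i : Fin m, r i
  set A := ∑ i : Fin m, a i
  have key : (m:ℝ) * (m:ℝ) ≤ (m:ℝ) * (A + (m:ℝ)⁻¹ * ((m:ℝ) * R + ((m:ℝ) - R))) := by
    have hinv : (m:ℝ) * ((m:ℝ)⁻¹ * ((m:ℝ) * R + ((m:ℝ) - R)))
        = (m:ℝ) * R + ((m:ℝ) - R) := by
      rw [← mul_assoc, mul_inv_cancel₀ (ne_of_gt hm'), one_mul]
    have hmA : (m:ℝ) * ((m:ℝ) - R) ≤ (m:ℝ) * A := by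
      apply mul_le_mul_of_nonneg_left _ (le_of_lt hm')
      linarith
    calc (m:ℝ) * (m:ℝ) ≤ (m:ℝ) * A + ((m:ℝ) * R + ((m:ℝ) - R)) := by nlinarith
      _ = (m:ℝ) * (A + (m:ℝ)⁻¹ * ((m:ℝ) * R + ((m:ℝ) - R))) := by rw [mul_add, hinv]
  exact le_of_mul_le_mul_left key hm'

noncomputable def bigS (m : ℕ) (σ : V → Fin m) : Finset V :=
  Finset.univ.biUnion (fun i : Fin m => greedy f I (machineSet σ i))

noncomputable def Oset (OPT : Finset V) {m : ℕ} (σ : V → Fin m) (i : Fin m) : Finset V :=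
  OPT.filter (fun x => greedy f I (insert x (machineSet σ i)) = greedy f I (machineSet σ i))

lemma marginal_bound' {m : ℕ} (hm : 0 < m) (OPT : Finset V) (e : V) (he : e ∈ OPT) :
    (Fintype.card (V → Fin m) : ℝ) ≤
      ∑ σ : V → Fin m,
        ((if e ∈ bigS f I m σ then (1:ℝ) else 0)
          + (m:ℝ)⁻¹ * ∑ i : Fin m, (if e ∈ Oset f I OPT σ i then (1:ℝ) else 0)) := by
  have := marginal_bound f I hm OPT e he
  simpa [bigS, Oset] using this

end AuxRandGreedi

/-- Theorem 5 (main theorem): RandGreeDi is an `αβ/(α+β)`-approximation in expectation. -/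
theorem randgreedi_main {V : Type*} [Fintype V] [DecidableEq V] [LinearOrder V]
    (f : Finset V → ℝ) (I : Finset V → Prop) [DecidablePred I]
    (hsub : Submodular f) (hmono : ∀ A B : Finset V, A ⊆ B → f A ≤ f B)
    (hnn : ∀ A : Finset V, 0 ≤ f A)
    (hher : ∀ A B : Finset V, A ⊆ B → I B → I A) (hempty : I ∅)
    (α : ℝ) (hα : 0 < α)
    (happrox : ∀ V' O : Finset V, O ⊆ V' → I O → α * f O ≤ f (greedy f I V'))
    (Alg : Finset V → Finset V) (β : ℝ) (hβ : 0 < β)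
    (halg : ∀ V' O : Finset V, O ⊆ V' → I O → β * f O ≤ f (Alg V'))
    (m : ℕ) (hm : 0 < m)
    (OPT : Finset V) (hOPT : I OPT) (hopt : ∀ A : Finset V, I A → f A ≤ f OPT) :
    α * β / (α + β) * f OPT ≤
      expAssign m (fun σ =>
        max (f (Alg (Finset.univ.biUnion (fun i : Fin m => greedy f I (machineSet σ i)))))
          ((Finset.univ : Finset (Fin m)).sup'
            (Finset.univ_nonempty_iff.mpr ⟨⟨0, hm⟩⟩)
            (fun i => f (greedy f I (machineSet σ i))))) := by
  classical
  have hab : (0:ℝ) < α + β := by linarith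
  have hm' : (0:ℝ) < m := by exact_mod_cast hm
  have hminv : (m:ℝ)⁻¹ * (m:ℝ) = 1 := inv_mul_cancel₀ (ne_of_gt hm')
  set N := (Fintype.card (V → Fin m) : ℝ) with hN
  have hNpos : (0:ℝ) < N := by
    have h1 : 0 < Fintype.card (V → Fin m) := Fintype.card_pos_iff.2 ⟨fun _ => ⟨0, hm⟩⟩
    rw [hN]; exact_mod_cast h1
  -- the marginal cost of each element of OPT along the chain induced by the linear order
  set c : V → ℝ :=
    fun e => f (OPT.filter (fun x => x ≤ e)) - f (OPT.filter (fun x => x < e)) with hc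
  have hc0 : ∀ e ∈ OPT, 0 ≤ c e := by
    intro e _
    have hsub' : OPT.filter (fun x => x < e) ⊆ OPT.filter (fun x => x ≤ e) := by
      intro x hx
      rw [Finset.mem_filter] at hx ⊢
      exact ⟨hx.1, le_of_lt hx.2⟩
    have := hmono _ _ hsub'
    simp only [hc]
    linarith
  have hcsum : ∑ e ∈ OPT, c e ≤ f OPT := by
    have h1 := chain_sum f OPT
    have h2 := hnn (∅ : Finset V)
    simp only [hc]
    linarith
  have hchainA : ∀ A ⊆ OPT, f OPT ≤ f A + ∑ e ∈ OPT, (if e ∈ A then 0 else c e) := by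
    intro A hA
    have h1 := chain_lower_bound f hsub OPT ((OPT \ A).card) A hA rfl
    have h2 : ∑ e ∈ OPT \ A,
        (f (OPT.filter (fun x => x ≤ e)) - f (OPT.filter (fun x => x < e)))
        = ∑ e ∈ OPT, (if e ∈ A then 0 else c e) := by
      rw [Finset.sdiff_eq_filter, Finset.sum_filter]
      refine Finset.sum_congr rfl ?_
      intro e _
      by_cases hmem : e ∈ A <;> simp [hmem, hc]
    rw [h2] at h1
    exact h1
  have hXbound : ∀ σ : V → Fin m,
      f OPT - ∑ e ∈ OPT, (if e ∈ bigS f I m σ then 0 else c e) ≤ f (OPT ∩ bigS f I m σ) := by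
    intro σ
    have h1 := hchainA (OPT ∩ bigS f I m σ) Finset.inter_subset_left
    have h2 : ∑ e ∈ OPT, (if e ∈ OPT ∩ bigS f I m σ then (0:ℝ) else c e)
        = ∑ e ∈ OPT, (if e ∈ bigS f I m σ then 0 else c e) := by
      refine Finset.sum_congr rfl ?_
      intro e heO
      by_cases hmem : e ∈ bigS f I m σ <;> simp [Finset.mem_inter, heO, hmem]
    rw [h2] at h1
    linarith
  have hOsub : ∀ (σ : V → Fin m) (i : Fin m), Oset f I OPT σ i ⊆ OPT := by
    intro σ i
    exact Finset.filter_subset _ _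
  have hObound : ∀ (σ : V → Fin m) (i : Fin m),
      f OPT - ∑ e ∈ OPT, (if e ∈ Oset f I OPT σ i then 0 else c e) ≤ f (Oset f I OPT σ i) := by
    intro σ i
    have h1 := hchainA (Oset f I OPT σ i) (hOsub σ i)
    linarith
  -- approximation guarantees pointwise
  have hAlg : ∀ σ : V → Fin m, β * f (OPT ∩ bigS f I m σ) ≤ f (Alg (bigS f I m σ)) := by
    intro σ
    exact halg _ _ Finset.inter_subset_right (hher _ OPT Finset.inter_subset_left hOPT)
  have hGr : ∀ (σ : V → Fin m) (i : Fin m),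
      α * f (Oset f I OPT σ i) ≤ f (greedy f I (machineSet σ i)) := by
    intro σ i
    have hloc : greedy f I (machineSet σ i ∪ Oset f I OPT σ i) = greedy f I (machineSet σ i) := by
      apply greedy_localization f I
      intro e he
      have : e ∈ OPT.filter (fun x => greedy f I (insert x (machineSet σ i))
          = greedy f I (machineSet σ i)) := he
      exact (Finset.mem_filter.1 this).2
    have happ := happrox (machineSet σ i ∪ Oset f I OPT σ i) (Oset f I OPT σ i)
      Finset.subset_union_right (hher _ OPT (hOsub σ i) hOPT)
    rw [hloc] at happ
    exact happ
  -- pointwise maximum bound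
  have hpoint : ∀ σ : V → Fin m,
      α * β / (α + β) *
        (f (OPT ∩ bigS f I m σ) + (m:ℝ)⁻¹ * ∑ i : Fin m, f (Oset f I OPT σ i)) ≤
      max (f (Alg (Finset.univ.biUnion (fun i : Fin m => greedy f I (machineSet σ i)))))
        ((Finset.univ : Finset (Fin m)).sup'
          (Finset.univ_nonempty_iff.mpr ⟨⟨0, hm⟩⟩)
          (fun i => f (greedy f I (machineSet σ i)))) := by
    intro σ
    set v := (Finset.univ : Finset (Fin m)).sup'
      (Finset.univ_nonempty_iff.mpr ⟨⟨0, hm⟩⟩)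
      (fun i => f (greedy f I (machineSet σ i))) with hv
    show α * β / (α + β) *
        (f (OPT ∩ bigS f I m σ) + (m:ℝ)⁻¹ * ∑ i : Fin m, f (Oset f I OPT σ i)) ≤
      max (f (Alg (bigS f I m σ))) v
    set u := f (Alg (bigS f I m σ)) with hu
    set X := f (OPT ∩ bigS f I m σ) with hX
    set Y := (m:ℝ)⁻¹ * ∑ i : Fin m, f (Oset f I OPT σ i) with hY
    have hvge : ∀ i : Fin m, f (greedy f I (machineSet σ i)) ≤ v := by
      intro i
      rw [hv]
      exact Finset.le_sup' (fun j => f (greedy f I (machineSet σ j))) (Finset.mem_univ i)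
    have hsumv : ∑ i : Fin m, α * f (Oset f I OPT σ i) ≤ (m:ℝ) * v := by
      calc ∑ i : Fin m, α * f (Oset f I OPT σ i)
          ≤ ∑ _i : Fin m, v := Finset.sum_le_sum (fun i _ => (hGr σ i).trans (hvge i))
        _ = (m:ℝ) * v := by
            rw [Finset.sum_const, Finset.card_univ, Fintype.card_fin, nsmul_eq_mul]
    have hYv : α * Y ≤ v := by
      have h1 : ∑ i : Fin m, α * f (Oset f I OPT σ i)
          = α * ∑ i : Fin m, f (Oset f I OPT σ i) := (Finset.mul_sum _ _ _).symm
      have h2 : α * Y = (m:ℝ)⁻¹ * (α * ∑ i : Fin m, f (Oset f I OPT σ i)) := by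
        rw [hY]; ring
      rw [h2, ← h1]
      calc (m:ℝ)⁻¹ * ∑ i : Fin m, α * f (Oset f I OPT σ i)
          ≤ (m:ℝ)⁻¹ * ((m:ℝ) * v) :=
            mul_le_mul_of_nonneg_left hsumv (le_of_lt (inv_pos.2 hm'))
        _ = v := by rw [← mul_assoc, hminv, one_mul]
    have hXu : β * X ≤ u := hAlg σ
    rw [div_mul_eq_mul_div, div_le_iff₀ hab]
    have h3 : α * u ≤ α * max u v := mul_le_mul_of_nonneg_left (le_max_left u v) hα.le
    have h4 : β * v ≤ β * max u v := mul_le_mul_of_nonneg_left (le_max_right u v) hβ.le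
    have h5 : α * (β * X) ≤ α * u := mul_le_mul_of_nonneg_left hXu hα.le
    have h6 : β * (α * Y) ≤ β * v := mul_le_mul_of_nonneg_left hYv hβ.le
    nlinarith [h3, h4, h5, h6]
  -- the expected-value bound for the two auxiliary quantities
  have step3 : N * f OPT ≤
      ∑ σ : V → Fin m,
        (f (OPT ∩ bigS f I m σ) + (m:ℝ)⁻¹ * ∑ i : Fin m, f (Oset f I OPT σ i)) := by
    have hlow : ∀ σ : V → Fin m,
        (f OPT - ∑ e ∈ OPT, (if e ∈ bigS f I m σ then 0 else c e))
          + (m:ℝ)⁻¹ * ∑ i : Fin m,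
              (f OPT - ∑ e ∈ OPT, (if e ∈ Oset f I OPT σ i then 0 else c e))
        ≤ f (OPT ∩ bigS f I m σ) + (m:ℝ)⁻¹ * ∑ i : Fin m, f (Oset f I OPT σ i) := by
      intro σ
      have h1 := hXbound σ
      have h2 : ∑ i : Fin m,
          (f OPT - ∑ e ∈ OPT, (if e ∈ Oset f I OPT σ i then 0 else c e))
          ≤ ∑ i : Fin m, f (Oset f I OPT σ i) :=
        Finset.sum_le_sum (fun i _ => hObound σ i)
      have h3 := mul_le_mul_of_nonneg_left h2 (le_of_lt (inv_pos.2 hm'))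
      linarith
    refine le_trans ?_ (Finset.sum_le_sum (fun σ _ => hlow σ))
    -- rewrite the lower bound sum
    have hexpand : ∀ σ : V → Fin m,
        (f OPT - ∑ e ∈ OPT, (if e ∈ bigS f I m σ then 0 else c e))
          + (m:ℝ)⁻¹ * ∑ i : Fin m,
              (f OPT - ∑ e ∈ OPT, (if e ∈ Oset f I OPT σ i then 0 else c e))
        = 2 * f OPT - ((∑ e ∈ OPT, (if e ∈ bigS f I m σ then 0 else c e))
            + (m:ℝ)⁻¹ * ∑ i : Fin m, ∑ e ∈ OPT, (if e ∈ Oset f I OPT σ i then 0 else c e)) := by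
      intro σ
      have h1 : ∑ i : Fin m,
          (f OPT - ∑ e ∈ OPT, (if e ∈ Oset f I OPT σ i then 0 else c e))
          = (m:ℝ) * f OPT - ∑ i : Fin m, ∑ e ∈ OPT, (if e ∈ Oset f I OPT σ i then 0 else c e) := by
        rw [Finset.sum_sub_distrib, Finset.sum_const, Finset.card_univ, Fintype.card_fin,
          nsmul_eq_mul]
      rw [h1, mul_sub, ← mul_assoc, hminv, one_mul]
      ring
    rw [Finset.sum_congr rfl (fun σ _ => hexpand σ), Finset.sum_sub_distrib,
      Finset.sum_const, Finset.card_univ]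
    have hcast : ((Fintype.card (V → Fin m)) : ℝ) = N := rfl
    rw [nsmul_eq_mul, hcast]
    -- it remains to bound the total deficit
    have hdef : ∑ σ : V → Fin m,
        ((∑ e ∈ OPT, (if e ∈ bigS f I m σ then 0 else c e))
          + (m:ℝ)⁻¹ * ∑ i : Fin m, ∑ e ∈ OPT, (if e ∈ Oset f I OPT σ i then 0 else c e))
        ≤ N * f OPT := by
      have hsplit : ∑ σ : V → Fin m,
          ((∑ e ∈ OPT, (if e ∈ bigS f I m σ then 0 else c e))
            + (m:ℝ)⁻¹ * ∑ i : Fin m, ∑ e ∈ OPT, (if e ∈ Oset f I OPT σ i then 0 else c e))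
          = ∑ e ∈ OPT, ((∑ σ : V → Fin m, (if e ∈ bigS f I m σ then 0 else c e))
              + (m:ℝ)⁻¹ * ∑ σ : V → Fin m, ∑ i : Fin m,
                  (if e ∈ Oset f I OPT σ i then 0 else c e)) := by
        rw [Finset.sum_add_distrib]
        have e1 : ∑ σ : V → Fin m, ∑ e ∈ OPT, (if e ∈ bigS f I m σ then (0:ℝ) else c e)
            = ∑ e ∈ OPT, ∑ σ : V → Fin m, (if e ∈ bigS f I m σ then (0:ℝ) else c e) :=
          Finset.sum_comm
        have e2 : ∑ σ : V → Fin m, (m:ℝ)⁻¹ * ∑ i : Fin m, ∑ e ∈ OPT,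
              (if e ∈ Oset f I OPT σ i then (0:ℝ) else c e)
            = (m:ℝ)⁻¹ * ∑ e ∈ OPT, ∑ σ : V → Fin m, ∑ i : Fin m,
              (if e ∈ Oset f I OPT σ i then (0:ℝ) else c e) := by
          rw [← Finset.mul_sum]
          congr 1
          have e3 : ∑ σ : V → Fin m, ∑ i : Fin m, ∑ e ∈ OPT,
                (if e ∈ Oset f I OPT σ i then (0:ℝ) else c e)
              = ∑ σ : V → Fin m, ∑ e ∈ OPT, ∑ i : Fin m,
                (if e ∈ Oset f I OPT σ i then (0:ℝ) else c e) :=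
            Finset.sum_congr rfl (fun σ _ => Finset.sum_comm)
          rw [e3]
          exact Finset.sum_comm
        rw [e1, e2, Finset.sum_add_distrib, Finset.mul_sum]
      rw [hsplit]
      have hper : ∀ e ∈ OPT,
          ((∑ σ : V → Fin m, (if e ∈ bigS f I m σ then 0 else c e))
            + (m:ℝ)⁻¹ * ∑ σ : V → Fin m, ∑ i : Fin m,
                (if e ∈ Oset f I OPT σ i then 0 else c e))
          ≤ N * c e := by
        intro e he
        set P := ∑ σ : V → Fin m, (if e ∈ bigS f I m σ then (1:ℝ) else 0) with hP
        set Q := ∑ σ : V → Fin m, ∑ i : Fin m,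
          (if e ∈ Oset f I OPT σ i then (1:ℝ) else 0) with hQ
        have hmarg : N ≤ P + (m:ℝ)⁻¹ * Q := by
          have h0 := marginal_bound' f I hm OPT e he
          have h1 : ∑ σ : V → Fin m,
              ((if e ∈ bigS f I m σ then (1:ℝ) else 0)
                + (m:ℝ)⁻¹ * ∑ i : Fin m, (if e ∈ Oset f I OPT σ i then (1:ℝ) else 0))
              = P + (m:ℝ)⁻¹ * Q := by
            rw [Finset.sum_add_distrib, hP, hQ, ← Finset.mul_sum]
          rw [h1] at h0
          exact h0
        have hzS : ∑ σ : V → Fin m, (if e ∈ bigS f I m σ then (0:ℝ) else c e)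
            = N * c e - c e * P := by
          have : ∀ σ : V → Fin m, (if e ∈ bigS f I m σ then (0:ℝ) else c e)
              = c e - c e * (if e ∈ bigS f I m σ then (1:ℝ) else 0) := by
            intro σ; split <;> ring
          rw [Finset.sum_congr rfl (fun σ _ => this σ), Finset.sum_sub_distrib,
            Finset.sum_const, Finset.card_univ, nsmul_eq_mul, ← Finset.mul_sum, ← hP]
        have hzO : ∑ σ : V → Fin m, ∑ i : Fin m,
              (if e ∈ Oset f I OPT σ i then (0:ℝ) else c e)
            = N * ((m:ℝ) * c e) - c e * Q := by
          have hin : ∀ σ : V → Fin m, ∑ i : Fin m,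
                (if e ∈ Oset f I OPT σ i then (0:ℝ) else c e)
              = (m:ℝ) * c e - c e * ∑ i : Fin m,
                (if e ∈ Oset f I OPT σ i then (1:ℝ) else 0) := by
            intro σ
            have : ∀ i : Fin m, (if e ∈ Oset f I OPT σ i then (0:ℝ) else c e)
                = c e - c e * (if e ∈ Oset f I OPT σ i then (1:ℝ) else 0) := by
              intro i; split <;> ring
            rw [Finset.sum_congr rfl (fun i _ => this i), Finset.sum_sub_distrib,
              Finset.sum_const, Finset.card_univ, Fintype.card_fin, nsmul_eq_mul,
              ← Finset.mul_sum]
          rw [Finset.sum_congr rfl (fun σ _ => hin σ), Finset.sum_sub_distrib,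
            Finset.sum_const, Finset.card_univ, nsmul_eq_mul, ← Finset.mul_sum, ← hQ]
        rw [hzS, hzO]
        have hkey := mul_le_mul_of_nonneg_left hmarg (hc0 e he)
        have hiden : N * c e - c e * P + (m:ℝ)⁻¹ * (N * ((m:ℝ) * c e) - c e * Q)
            = 2 * (N * c e) - c e * (P + (m:ℝ)⁻¹ * Q) := by
          field_simp
          ring
        rw [hiden]
        linarith
      calc ∑ e ∈ OPT, ((∑ σ : V → Fin m, (if e ∈ bigS f I m σ then 0 else c e))
            + (m:ℝ)⁻¹ * ∑ σ : V → Fin m, ∑ i : Fin m,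
                (if e ∈ Oset f I OPT σ i then 0 else c e))
          ≤ ∑ e ∈ OPT, N * c e := Finset.sum_le_sum hper
        _ = N * ∑ e ∈ OPT, c e := (Finset.mul_sum _ _ _).symm
        _ ≤ N * f OPT := mul_le_mul_of_nonneg_left hcsum (le_of_lt hNpos)
    linarith
  -- final assembly
  simp only [expAssign]
  rw [le_div_iff₀ hNpos]
  calc α * β / (α + β) * f OPT * N
      = α * β / (α + β) * (N * f OPT) := by ring
    _ ≤ α * β / (α + β) *
        ∑ σ : V → Fin m,
          (f (OPT ∩ bigS f I m σ) + (m:ℝ)⁻¹ * ∑ i : Fin m, f (Oset f I OPT σ i)) :=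
        mul_le_mul_of_nonneg_left step3 (by positivity)
    _ = ∑ σ : V → Fin m, α * β / (α + β) *
          (f (OPT ∩ bigS f I m σ) + (m:ℝ)⁻¹ * ∑ i : Fin m, f (Oset f I OPT σ i)) :=
        Finset.mul_sum _ _ _
    _ ≤ _ := Finset.sum_le_sum (fun σ _ => hpoint σ)
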